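/- If x is a totally nonnegative n×n matrix and y is a totally positive n×n matrix, then both xy and yx are totally positive. -/

import Mathlib

open Matrix Finset Equiv

/-- The set of `k`-element column choices from `Fin n`. -/
abbrev CBCols (n k : ℕ) := {t : Finset (Fin n) // t.card = k}

/-- The strictly increasing enumeration of a column choice. -/
noncomputable def cbEmb {n k : ℕ} (t : CBCols n k) : Fin k → Fin n :=
  t.1.orderEmbOfFin t.2

lemma cbEmb_strictMono {n k : ℕ} (t : CBCols n k) : StrictMono (cbEmb t) :=
  (t.1.orderEmbOfFin t.2).strictMono

lemma cbEmb_mem {n k : ℕ} (t : CBCols n k) (i : Fin k) : cbEmb t i ∈ t.1 :=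
  Finset.orderEmbOfFin_mem t.1 t.2 i

lemma cbEmb_image {n k : ℕ} (t : CBCols n k) :
    Finset.image (cbEmb t) Finset.univ = t.1 := by
  apply Finset.eq_of_subset_of_card_le
  · intro a ha
    simp only [Finset.mem_image] at ha
    obtain ⟨i, _, rfl⟩ := ha
    exact cbEmb_mem t i
  · rw [Finset.card_image_of_injective _ (cbEmb_strictMono t).injective, t.2,
      Finset.card_univ, Fintype.card_fin]

/-- forward map for the Cauchy–Binet reindexing -/
noncomputable def cbPair {n k : ℕ} (f : Fin k → Fin n) (hf : Function.Injective f) :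
    CBCols n k × Equiv.Perm (Fin k) := by
  classical
  have htf : (Finset.image f Finset.univ).card = k := by
    rw [Finset.card_image_of_injective _ hf, Finset.card_univ, Fintype.card_fin]
  refine ⟨⟨Finset.image f Finset.univ, htf⟩, Equiv.ofBijective
    (fun i => ((Finset.image f Finset.univ).orderIsoOfFin htf).symm
      ⟨f i, Finset.mem_image_of_mem f (Finset.mem_univ i)⟩)
    ((Finite.injective_iff_bijective).1 ?_)⟩
  intro a b hab
  have h2 := ((Finset.image f Finset.univ).orderIsoOfFin htf).symm.injective hab
  exact hf (congrArg Subtype.val h2)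

lemma cbPair_spec {n k : ℕ} (f : Fin k → Fin n) (hf : Function.Injective f) (i : Fin k) :
    cbEmb (cbPair f hf).1 ((cbPair f hf).2 i) = f i := by
  classical
  show ((Finset.image f Finset.univ).orderEmbOfFin
      (by rw [Finset.card_image_of_injective _ hf, Finset.card_univ, Fintype.card_fin]))
    (((Finset.image f Finset.univ).orderIsoOfFin
        (by rw [Finset.card_image_of_injective _ hf, Finset.card_univ, Fintype.card_fin])).symm
      ⟨f i, Finset.mem_image_of_mem f (Finset.mem_univ i)⟩) = f i
  rw [← Finset.coe_orderIsoOfFin_apply, OrderIso.apply_symm_apply]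

/-- The Cauchy–Binet formula. -/
theorem cauchyBinet {k n : ℕ} (A : Matrix (Fin k) (Fin n) ℝ) (B : Matrix (Fin n) (Fin k) ℝ) :
    (A * B).det = ∑ t : CBCols n k,
      (A.submatrix id (cbEmb t)).det * (B.submatrix (cbEmb t) id).det := by
  classical
  -- Step 1: multilinear expansion over all functions `Fin k → Fin n`
  have step1 : (A * B).det
      = ∑ f : Fin k → Fin n, (∏ i, A i (f i)) * (B.submatrix f id).det := by
    have hrow : (A * B) = Matrix.of fun i => ∑ x : Fin n, A i x • B x := by
      ext i j
      simp [Matrix.mul_apply]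
    calc (A * B).det
        = (Matrix.detRowAlternating (n := Fin k) (R := ℝ)).toMultilinearMap
            (fun i => ∑ x : Fin n, A i x • B x) := by rw [hrow]; rfl
      _ = ∑ f : Fin k → Fin n,
            (Matrix.detRowAlternating (n := Fin k) (R := ℝ)).toMultilinearMap
              (fun i => A i (f i) • B (f i)) :=
          (Matrix.detRowAlternating (n := Fin k) (R := ℝ)).toMultilinearMap.map_sum
            (g := fun i (x : Fin n) => A i x • B x)
      _ = ∑ f : Fin k → Fin n, (∏ i, A i (f i)) * (B.submatrix f id).det := by
          refine Finset.sum_congr rfl fun f _ => ?_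
          rw [MultilinearMap.map_smul_univ]
          rfl
  rw [step1]
  -- Step 2: restrict to injective functions
  rw [← Finset.sum_subset
      (Finset.filter_subset (fun f : Fin k → Fin n => Function.Injective f) Finset.univ)
      (fun f _ hf => ?_)]
  swap
  · simp only [Finset.mem_filter, Finset.mem_univ, true_and] at hf
    obtain ⟨i, j, hij, hne⟩ : ∃ i j, f i = f j ∧ i ≠ j := by
      rw [Function.Injective] at hf
      push_neg at hf
      obtain ⟨i, j, h1, h2⟩ := hf
      exact ⟨i, j, h1, h2⟩
    have hz : (B.submatrix f id).det = 0 :=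
      Matrix.det_zero_of_row_eq hne (by ext x; simp [Matrix.submatrix_apply, hij])
    rw [hz, mul_zero]
  -- Step 3: reindex injective functions by (column set, permutation) pairs
  have step3 : ∑ f ∈ Finset.univ.filter (fun f : Fin k → Fin n => Function.Injective f),
        (∏ i, A i (f i)) * (B.submatrix f id).det
      = ∑ p : CBCols n k × Equiv.Perm (Fin k),
        (∏ i, A i (cbEmb p.1 (p.2 i))) * (B.submatrix (cbEmb p.1 ∘ p.2) id).det := by
    refine Finset.sum_bij'
      (i := fun f hf => cbPair f (by simpa using hf))
      (j := fun p _ => cbEmb p.1 ∘ p.2)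
      (fun _ _ => Finset.mem_univ _)
      (fun p _ => by
        simp only [Finset.mem_filter, Finset.mem_univ, true_and]
        exact (cbEmb_strictMono p.1).injective.comp p.2.injective)
      (fun f hf => funext fun i => cbPair_spec f (by simpa using hf) i)
      (fun p _ => ?_) (fun f hf => ?_)
    · -- right inverse : cbPair (cbEmb p.1 ∘ p.2) = p
      have hfinj : Function.Injective (cbEmb p.1 ∘ p.2) :=
        (cbEmb_strictMono p.1).injective.comp p.2.injective
      have hspec : ∀ i, cbEmb (cbPair (cbEmb p.1 ∘ p.2) (by simpa using hfinj)).1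
          ((cbPair (cbEmb p.1 ∘ p.2) (by simpa using hfinj)).2 i) = cbEmb p.1 (p.2 i) :=
        fun i => cbPair_spec _ _ i
      have hteq : (cbPair (cbEmb p.1 ∘ p.2) (by simpa using hfinj)).1 = p.1 := by
        apply Subtype.ext
        show Finset.image (cbEmb p.1 ∘ p.2) Finset.univ = p.1.1
        rw [← Finset.image_image, Finset.image_univ_equiv]
        exact cbEmb_image p.1
      have hseq : (cbPair (cbEmb p.1 ∘ p.2) (by simpa using hfinj)).2 = p.2 := by
        apply Equiv.ext
        intro i
        have e1 := hspec i
        rw [hteq] at e1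
        exact (cbEmb_strictMono p.1).injective e1
      exact Prod.ext hteq hseq
    · -- values agree
      have hfe : f = cbEmb (cbPair f (by simpa using hf)).1 ∘ (cbPair f (by simpa using hf)).2 :=
        funext fun i => (cbPair_spec f (by simpa using hf) i).symm
      conv_lhs => rw [hfe]
      rfl
  rw [step3, Fintype.sum_prod_type]
  -- Step 4: sum over permutations gives the product of minors
  refine Finset.sum_congr rfl fun t _ => ?_
  have hB : ∀ σ : Equiv.Perm (Fin k),
      (B.submatrix (cbEmb t ∘ σ) id).det
        = ((Equiv.Perm.sign σ : ℤ) : ℝ) * (B.submatrix (cbEmb t) id).det := by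
    intro σ
    have hsub : B.submatrix (cbEmb t ∘ σ) id = (B.submatrix (cbEmb t) id).submatrix σ id := by
      ext i j; simp
    rw [hsub, Matrix.det_permute]
    try push_cast
    try ring
  have hA : (A.submatrix id (cbEmb t)).det
      = ∑ σ : Equiv.Perm (Fin k), ((Equiv.Perm.sign σ : ℤ) : ℝ) * ∏ i, A i (cbEmb t (σ i)) := by
    rw [← Matrix.det_transpose, Matrix.det_apply']
    rfl
  rw [hA, Finset.sum_mul]
  refine Finset.sum_congr rfl fun σ _ => ?_
  rw [hB σ]
  ring

/-- If the rows of a `k × n` matrix are linearly independent (in the `vecMul` sense),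
then some `k × k` column minor is nonzero. -/
theorem exists_minor_ne_zero {k n : ℕ} (M : Matrix (Fin k) (Fin n) ℝ)
    (hM : ∀ v : Fin k → ℝ, v ᵥ* M = 0 → v = 0) :
    ∃ t : CBCols n k, (M.submatrix id (cbEmb t)).det ≠ 0 := by
  by_contra hcon
  push_neg at hcon
  have hzero : (M * Mᵀ).det = 0 := by
    rw [cauchyBinet M Mᵀ]
    refine Finset.sum_eq_zero fun t _ => ?_
    rw [hcon t, zero_mul]
  obtain ⟨v, hv0, hveq⟩ := (Matrix.exists_mulVec_eq_zero_iff).2 hzero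
  apply hv0
  apply hM
  have h1 : v ⬝ᵥ ((M * Mᵀ) *ᵥ v) = 0 := by rw [hveq, dotProduct_zero]
  have h2 : (v ᵥ* M) ⬝ᵥ (v ᵥ* M) = 0 := by
    rw [← h1, ← Matrix.mulVec_mulVec, Matrix.dotProduct_mulVec, Matrix.mulVec_transpose]
  exact dotProduct_self_eq_zero.1 h2

/-- A square real matrix is totally positive if every minor is positive. -/
def TotallyPositive {n : ℕ} (x : Matrix (Fin n) (Fin n) ℝ) : Prop :=
  ∀ (k : ℕ) (r c : Fin k → Fin n), StrictMono r → StrictMono c →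
    0 < (x.submatrix r c).det

/-- A square real matrix is totally nonnegative if every minor is nonnegative. -/
def TotallyNonneg {n : ℕ} (x : Matrix (Fin n) (Fin n) ℝ) : Prop :=
  ∀ (k : ℕ) (r c : Fin k → Fin n), StrictMono r → StrictMono c →
    0 ≤ (x.submatrix r c).det

lemma totallyPositive_transpose {n : ℕ} {x : Matrix (Fin n) (Fin n) ℝ}
    (hx : TotallyPositive x) : TotallyPositive xᵀ := by
  intro k r c hr hc
  have h : xᵀ.submatrix r c = (x.submatrix c r)ᵀ := rfl
  rw [h, Matrix.det_transpose]
  exact hx k c r hc hr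

lemma totallyNonneg_transpose {n : ℕ} {x : Matrix (Fin n) (Fin n) ℝ}
    (hx : TotallyNonneg x) : TotallyNonneg xᵀ := by
  intro k r c hr hc
  have h : xᵀ.submatrix r c = (x.submatrix c r)ᵀ := rfl
  rw [h, Matrix.det_transpose]
  exact hx k c r hc hr

lemma totallyPositive_mul {n : ℕ} {x y : Matrix (Fin n) (Fin n) ℝ}
    (hx : TotallyNonneg x) (hxu : IsUnit x.det) (hy : TotallyPositive y) :
    TotallyPositive (x * y) := by
  intro k r c hr hc
  have hsub : (x * y).submatrix r c = (x.submatrix r id) * (y.submatrix id c) := by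
    ext i j
    simp [Matrix.mul_apply]
  rw [hsub, cauchyBinet]
  have hsimp : ∀ t : CBCols n k,
      ((x.submatrix r id).submatrix id (cbEmb t)) = x.submatrix r (cbEmb t) := fun _ => rfl
  have hsimp' : ∀ t : CBCols n k,
      ((y.submatrix id c).submatrix (cbEmb t) id) = y.submatrix (cbEmb t) c := fun _ => rfl
  apply Finset.sum_pos'
  · intro t _
    rw [hsimp, hsimp']
    exact mul_nonneg (hx k r (cbEmb t) hr (cbEmb_strictMono t))
      (le_of_lt (hy k (cbEmb t) c (cbEmb_strictMono t) hc))
  · -- existence of a positive term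
    have hrows : ∀ v : Fin k → ℝ, v ᵥ* (x.submatrix r id) = 0 → v = 0 := by
      intro v hv
      classical
      have hvj : ∀ j, ∑ i, v i * x (r i) j = 0 := by
        intro j
        have := congrFun hv j
        rw [Matrix.vecMul, dotProduct] at this
        simpa using this
      set u : Fin n → ℝ := fun a => ∑ i, if r i = a then v i else 0 with hu
      have hux : u ᵥ* x = 0 := by
        funext j
        have h1 : (u ᵥ* x) j = ∑ a, u a * x a j := by
          rw [Matrix.vecMul, dotProduct]
        rw [h1]
        have h2 : ∑ a, u a * x a j = ∑ i, v i * x (r i) j := by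
          simp only [hu, Finset.sum_mul]
          rw [Finset.sum_comm]
          refine Finset.sum_congr rfl fun i _ => ?_
          rw [show (fun a => (if r i = a then v i else 0) * x a j)
              = fun a => if r i = a then v i * x a j else 0 from
            funext fun a => by split <;> simp]
          rw [Finset.sum_ite_eq]
          simp
        rw [h2, hvj j]
        rfl
      have hu0 : u = 0 := by
        by_contra hne
        have hd : x.det = 0 := (Matrix.exists_vecMul_eq_zero_iff).1 ⟨u, hne, hux⟩
        rw [hd] at hxu
        exact hxu.ne_zero rfl
      funext i
      have h3 : u (r i) = v i := by
        show (∑ i' : Fin k, if r i' = r i then v i' else 0) = v i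
        rw [Finset.sum_eq_single i (fun i' _ hne => by
          rw [if_neg (fun h => hne (hr.injective h))]) (by simp)]
        simp
      rw [← h3, hu0]
      rfl
    obtain ⟨t, ht⟩ := exists_minor_ne_zero (x.submatrix r id) hrows
    refine ⟨t, Finset.mem_univ t, ?_⟩
    rw [hsimp, hsimp']
    rw [hsimp] at ht
    have h1 : 0 < (x.submatrix r (cbEmb t)).det :=
      lt_of_le_of_ne (hx k r (cbEmb t) hr (cbEmb_strictMono t)) (Ne.symm ht)
    exact mul_pos h1 (hy k (cbEmb t) c (cbEmb_strictMono t) hc)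

theorem stmt2 (n : ℕ) (x y : Matrix (Fin n) (Fin n) ℝ)
    (hx : TotallyNonneg x) (hxu : IsUnit x.det) (hy : TotallyPositive y) :
    TotallyPositive (x * y) ∧ TotallyPositive (y * x) := by
  refine ⟨totallyPositive_mul hx hxu hy, ?_⟩
  have hxt : TotallyNonneg xᵀ := totallyNonneg_transpose hx
  have hxut : IsUnit xᵀ.det := by rwa [Matrix.det_transpose]
  have hyt : TotallyPositive yᵀ := totallyPositive_transpose hy
  have h := totallyPositive_mul hxt hxut hyt
  have heq : xᵀ * yᵀ = (y * x)ᵀ := (Matrix.transpose_mul y x).symm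
  rw [heq] at h
  have h2 := totallyPositive_transpose h
  rw [Matrix.transpose_transpose] at h2
  exact h2
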